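/- Let V be a finite-dimensional real normed space and let K ⊆ V be a convex set that is a base of a generating positive cone: with V⁺ = {αs : α ≥ 0, s ∈ K}, every nonzero v ∈ V⁺ has a unique representation v = αs with α > 0 and s ∈ K, and V = V⁺ − V⁺. If M is an observable on K, then there exists a unique normalized vector-valued measure Γ for K such that Γ(A)(s) = M(s)(A) for every s ∈ K and every Borel set A ⊆ ℝ. -/

import Mathlib

open MeasureTheory

variable {V : Type*} [NormedAddCommGroup V] [NormedSpace ℝ V]

/-- An observable on a convex subset `K` of `V`: a σ-affine map from `K` to
the Borel probability measures on `α`. -/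
structure Observable (K : Set V) (α : Type*) [MeasurableSpace α] where
  toFun : K → Measure α
  prob : ∀ s, IsProbabilityMeasure (toFun s)
  sigmaAffine : ∀ (lam : ℕ → ℝ) (v : ℕ → K) (s : K), (∀ i, 0 ≤ lam i) →
    HasSum lam 1 → HasSum (fun i => lam i • (v i : V)) (s : V) →
    ∀ A : Set α, MeasurableSet A →
      toFun s A = ∑' i, ENNReal.ofReal (lam i) * toFun (v i) A

/-- A normalized vector-valued measure (NVM) for `K`: a map `Γ` from the Borel
sets of `ℝ` to the continuous dual `V*` of `V` such that for every `s ∈ K` the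
set function `A ↦ Γ(A)(s)` is a Borel probability measure on `ℝ`. -/
def IsNVM (K : Set V) (Γ : Set ℝ → (V →L[ℝ] ℝ)) : Prop :=
  ∀ s ∈ K, ∃ μ : Measure ℝ, IsProbabilityMeasure μ ∧
    ∀ A : Set ℝ, MeasurableSet A → Γ A s = (μ A).toReal

/-- Auxiliary: an affine real-valued function on a base `K` of a generating cone
extends to a continuous linear functional. -/
theorem affine_extend_clm [FiniteDimensional ℝ V] {K : Set V}
    (hconv : Convex ℝ K)
    (hbase : ∀ (α β : ℝ) (s t : V), 0 < α → 0 < β → s ∈ K → t ∈ K →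
      α • s = β • t → α = β ∧ s = t)
    (hgen : ∀ v : V, ∃ (α β : ℝ) (s t : V), 0 ≤ α ∧ 0 ≤ β ∧ s ∈ K ∧ t ∈ K ∧
      v = α • s - β • t)
    (m : V → ℝ)
    (haff : ∀ s ∈ K, ∀ t ∈ K, ∀ l : ℝ, 0 ≤ l → l ≤ 1 →
      m (l • s + (1 - l) • t) = l * m s + (1 - l) * m t) :
    ∃ f : V →L[ℝ] ℝ, ∀ s ∈ K, f s = m s := by
  -- 0 is not in K
  have hK0 : (0 : V) ∉ K := by
    intro h0
    have := (hbase 1 2 0 0 one_pos two_pos h0 h0 (by simp)).1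
    norm_num at this
  -- combining two cone elements
  have hcomb : ∀ (α β : ℝ) (s t : V), 0 ≤ α → 0 ≤ β → s ∈ K → t ∈ K →
      ∃ (γ : ℝ) (u : V), 0 ≤ γ ∧ u ∈ K ∧ α • s + β • t = γ • u ∧
        α * m s + β * m t = γ * m u := by
    intro α β s t hα hβ hs ht
    rcases eq_or_lt_of_le (add_nonneg hα hβ) with hc | hc
    · have hα0 : α = 0 := by linarith
      have hβ0 : β = 0 := by linarith
      exact ⟨0, s, le_refl 0, hs, by simp [hα0, hβ0], by simp [hα0, hβ0]⟩
    · set c := α + β with hcdef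
      refine ⟨c, (α / c) • s + (β / c) • t, hc.le, ?_, ?_, ?_⟩
      · exact hconv hs ht (div_nonneg hα hc.le) (div_nonneg hβ hc.le)
          (by field_simp; linarith)
      · rw [smul_add, smul_smul, smul_smul, mul_div_cancel₀ _ hc.ne',
          mul_div_cancel₀ _ hc.ne']
      · have h1 : (1 : ℝ) - α / c = β / c := by field_simp; linarith
        rw [← h1, haff s hs t ht (α / c) (div_nonneg hα hc.le)
          (by rw [div_le_one hc]; linarith), h1]
        field_simp
  -- four-term consistency
  have hB : ∀ (α β α' β' : ℝ) (s t s' t' : V), 0 ≤ α → 0 ≤ β → 0 ≤ α' → 0 ≤ β' →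
      s ∈ K → t ∈ K → s' ∈ K → t' ∈ K →
      α • s + β • t = α' • s' + β' • t' →
      α * m s + β * m t = α' * m s' + β' * m t' := by
    intro α β α' β' s t s' t' hα hβ hα' hβ' hs ht hs' ht' heq
    obtain ⟨γ, u, hγ, hu, hgu, hmu⟩ := hcomb α β s t hα hβ hs ht
    obtain ⟨γ', u', hγ', hu', hgu', hmu'⟩ := hcomb α' β' s' t' hα' hβ' hs' ht'
    rw [hmu, hmu']
    have hkey : γ • u = γ' • u' := by rw [← hgu, ← hgu', heq]
    rcases eq_or_lt_of_le hγ with h0 | h0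
    · rcases eq_or_lt_of_le hγ' with h0' | h0'
      · rw [← h0, ← h0']; ring
      · exfalso
        have : γ' • u' = 0 := by rw [← hkey, ← h0, zero_smul]
        have : u' = 0 := by
          have := smul_eq_zero.mp this
          rcases this with h | h
          · exact absurd h h0'.ne'
          · exact h
        exact hK0 (this ▸ hu')
    · rcases eq_or_lt_of_le hγ' with h0' | h0'
      · exfalso
        have : γ • u = 0 := by rw [hkey, ← h0', zero_smul]
        have : u = 0 := by
          rcases smul_eq_zero.mp this with h | h
          · exact absurd h h0.ne'
          · exact h
        exact hK0 (this ▸ hu)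
      · obtain ⟨hγγ, huu⟩ := hbase γ γ' u u' h0 h0' hu hu' hkey
        rw [hγγ, huu]
  -- well-definedness for differences
  have hD : ∀ (α β α' β' : ℝ) (s t s' t' : V), 0 ≤ α → 0 ≤ β → 0 ≤ α' → 0 ≤ β' →
      s ∈ K → t ∈ K → s' ∈ K → t' ∈ K →
      α • s - β • t = α' • s' - β' • t' →
      α * m s - β * m t = α' * m s' - β' * m t' := by
    intro α β α' β' s t s' t' hα hβ hα' hβ' hs ht hs' ht' heq
    have h2 : α • s + β' • t' = α' • s' + β • t := by
      have := sub_eq_sub_iff_add_eq_add.mp heq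
      linear_combination (norm := module) this
    have := hB α β' α' β s t' s' t hα hβ' hα' hβ hs ht' hs' ht h2
    linarith
  -- define the function by choice
  have hspec : ∀ v : V, ∃ r : ℝ, ∀ (α β : ℝ) (s t : V), 0 ≤ α → 0 ≤ β →
      s ∈ K → t ∈ K → v = α • s - β • t → r = α * m s - β * m t := by
    intro v
    obtain ⟨α, β, s, t, hα, hβ, hs, ht, hv⟩ := hgen v
    refine ⟨α * m s - β * m t, fun α' β' s' t' hα' hβ' hs' ht' hv' => ?_⟩
    exact hD α β α' β' s t s' t' hα hβ hα' hβ' hs ht hs' ht' (hv ▸ hv')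
  choose L hL using hspec
  -- decomposition picker
  have hrep : ∀ v : V, ∃ (α β : ℝ) (s t : V), 0 ≤ α ∧ 0 ≤ β ∧ s ∈ K ∧ t ∈ K ∧
      v = α • s - β • t ∧ L v = α * m s - β * m t := by
    intro v
    obtain ⟨α, β, s, t, hα, hβ, hs, ht, hv⟩ := hgen v
    exact ⟨α, β, s, t, hα, hβ, hs, ht, hv, hL v α β s t hα hβ hs ht hv⟩
  have hadd : ∀ v w : V, L (v + w) = L v + L w := by
    intro v w
    obtain ⟨α, β, s, t, hα, hβ, hs, ht, hv, hLv⟩ := hrep v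
    obtain ⟨α', β', s', t', hα', hβ', hs', ht', hw, hLw⟩ := hrep w
    obtain ⟨γ, u, hγ, hu, hgu, hmu⟩ := hcomb α α' s s' hα hα' hs hs'
    obtain ⟨δ, u', hδ, hu', hgu', hmu'⟩ := hcomb β β' t t' hβ hβ' ht ht'
    have hvw : v + w = γ • u - δ • u' := by
      rw [← hgu, ← hgu', hv, hw]; abel
    rw [hL (v + w) γ δ u u' hγ hδ hu hu' hvw, ← hmu, ← hmu', hLv, hLw]
    ring
  have hsmul : ∀ (c : ℝ) (v : V), L (c • v) = c * L v := by
    intro c v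
    obtain ⟨α, β, s, t, hα, hβ, hs, ht, hv, hLv⟩ := hrep v
    rcases le_or_gt 0 c with hc | hc
    · have hcv : c • v = (c * α) • s - (c * β) • t := by
        rw [hv, smul_sub, smul_smul, smul_smul]
      rw [hL (c • v) (c * α) (c * β) s t (mul_nonneg hc hα) (mul_nonneg hc hβ)
        hs ht hcv, hLv]
      ring
    · have hcv : c • v = (-c * β) • t - (-c * α) • s := by
        rw [hv, smul_sub, smul_smul, smul_smul]
        module
      rw [hL (c • v) (-c * β) (-c * α) t s
        (mul_nonneg (by linarith) hβ) (mul_nonneg (by linarith) hα) ht hs hcv,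
        hLv]
      ring
  let f : V →ₗ[ℝ] ℝ :=
    { toFun := L
      map_add' := hadd
      map_smul' := fun c v => hsmul c v }
  refine ⟨f.toContinuousLinearMap, fun s hs => ?_⟩
  have : s = (1 : ℝ) • s - (0 : ℝ) • s := by simp
  have := hL s 1 0 s s zero_le_one le_rfl hs hs this
  simpa [f] using this

/-- Let `V` be a finite-dimensional real normed space and let
`K ⊆ V` be a convex set that is a base of a generating positive cone
`V⁺ = {αs : α ≥ 0, s ∈ K}`: representations `v = αs` with `α > 0`, `s ∈ K` are
unique, and `V = V⁺ - V⁺`.  Then every observable `M` on `K` arises from a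
normalized vector-valued measure `Γ` with `Γ(A)(s) = M(s)(A)` for all `s ∈ K`
and Borel `A ⊆ ℝ`, and `Γ` is unique (as a function of Borel sets). -/
theorem observable_gives_unique_nvm [FiniteDimensional ℝ V] {K : Set V}
    (hconv : Convex ℝ K)
    (hbase : ∀ (α β : ℝ) (s t : V), 0 < α → 0 < β → s ∈ K → t ∈ K →
      α • s = β • t → α = β ∧ s = t)
    (hgen : ∀ v : V, ∃ (α β : ℝ) (s t : V), 0 ≤ α ∧ 0 ≤ β ∧ s ∈ K ∧ t ∈ K ∧
      v = α • s - β • t)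
    (M : Observable K ℝ) :
    ∃ Γ : Set ℝ → (V →L[ℝ] ℝ), IsNVM K Γ ∧
      (∀ (s : K) (A : Set ℝ), MeasurableSet A →
        Γ A (s : V) = (M.toFun s A).toReal) ∧
      ∀ Γ' : Set ℝ → (V →L[ℝ] ℝ), IsNVM K Γ' →
        (∀ (s : K) (A : Set ℝ), MeasurableSet A →
          Γ' A (s : V) = (M.toFun s A).toReal) →
        ∀ A : Set ℝ, MeasurableSet A → Γ' A = Γ A := by
    classical
  -- the measure-value function, for each measurable set
  have key : ∀ A : Set ℝ, MeasurableSet A → ∃ f : V →L[ℝ] ℝ,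
      ∀ (s : V) (hs : s ∈ K), f s = (M.toFun ⟨s, hs⟩ A).toReal := by
    intro A hA
    set m : V → ℝ := fun v =>
      if h : v ∈ K then (M.toFun ⟨v, h⟩ A).toReal else 0 with hm
    have hmval : ∀ (s : V) (hs : s ∈ K), m s = (M.toFun ⟨s, hs⟩ A).toReal := by
      intro s hs; simp [hm, dif_pos hs]
    have haff : ∀ s ∈ K, ∀ t ∈ K, ∀ l : ℝ, 0 ≤ l → l ≤ 1 →
        m (l • s + (1 - l) • t) = l * m s + (1 - l) * m t := by
      intro s hs t ht l hl0 hl1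
      have hu : l • s + (1 - l) • t ∈ K := hconv hs ht hl0 (by linarith) (by ring)
      set lam : ℕ → ℝ := fun i => if i = 0 then l else if i = 1 then 1 - l else 0
        with hlam
      set v : ℕ → K := fun i => if i = 1 then (⟨t, ht⟩ : K) else ⟨s, hs⟩ with hv
      have hnn : ∀ i, 0 ≤ lam i := by
        intro i
        simp only [hlam]
        split
        · exact hl0
        · split
          · linarith
          · exact le_rfl
      have hs1 : HasSum lam 1 := by
        have h1 : HasSum (fun i : ℕ => if i = 0 then l else 0) l :=
          hasSum_ite_eq 0 l
        have h2 : HasSum (fun i : ℕ => if i = 1 then 1 - l else 0) (1 - l) :=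
          hasSum_ite_eq 1 (1 - l)
        have := h1.add h2
        convert this using 2 with i
        · by_cases h0 : i = 0
          · simp [hlam, h0]
          · by_cases h1 : i = 1 <;> simp [hlam, h0, h1]
        · ring
      have hs2 : HasSum (fun i => lam i • (v i : V)) (l • s + (1 - l) • t) := by
        have h1 : HasSum (fun i : ℕ => if i = 0 then l • s else 0) (l • s) :=
          hasSum_ite_eq 0 (l • s)
        have h2 : HasSum (fun i : ℕ => if i = 1 then (1 - l) • t else 0)
            ((1 - l) • t) := hasSum_ite_eq 1 ((1 - l) • t)
        have := h1.add h2
        convert this using 2 with i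
        by_cases h0 : i = 0
        · simp [hlam, hv, h0]
        · by_cases h1 : i = 1 <;> simp [hlam, hv, h0, h1]
      have hMeq := M.sigmaAffine lam v ⟨l • s + (1 - l) • t, hu⟩ hnn hs1 hs2 A hA
      have htsum : ∑' i, ENNReal.ofReal (lam i) * M.toFun (v i) A =
          ENNReal.ofReal l * M.toFun ⟨s, hs⟩ A +
          ENNReal.ofReal (1 - l) * M.toFun ⟨t, ht⟩ A := by
        rw [tsum_eq_sum (s := {0, 1})]
        · simp [hlam, hv]
        · intro b hb
          simp only [Finset.mem_insert, Finset.mem_singleton, not_or] at hb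
          simp [hlam, hb.1, hb.2]
      rw [htsum] at hMeq
      haveI := M.prob ⟨s, hs⟩
      haveI := M.prob ⟨t, ht⟩
      have hfin1 : ENNReal.ofReal l * M.toFun ⟨s, hs⟩ A ≠ ⊤ :=
        ENNReal.mul_ne_top ENNReal.ofReal_ne_top (measure_ne_top _ _)
      have hfin2 : ENNReal.ofReal (1 - l) * M.toFun ⟨t, ht⟩ A ≠ ⊤ :=
        ENNReal.mul_ne_top ENNReal.ofReal_ne_top (measure_ne_top _ _)
      rw [hmval _ hu, hmval _ hs, hmval _ ht, hMeq, ENNReal.toReal_add hfin1 hfin2,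
        ENNReal.toReal_mul, ENNReal.toReal_mul, ENNReal.toReal_ofReal hl0,
        ENNReal.toReal_ofReal (by linarith)]
    obtain ⟨f, hf⟩ := affine_extend_clm hconv hbase hgen m haff
    exact ⟨f, fun s hs => by rw [hf s hs, hmval s hs]⟩
  -- define Γ
  set Γ : Set ℝ → (V →L[ℝ] ℝ) := fun A =>
    if h : MeasurableSet A then (key A h).choose else 0 with hΓ
  have hΓval : ∀ (A : Set ℝ) (hA : MeasurableSet A) (s : V) (hs : s ∈ K),
      Γ A s = (M.toFun ⟨s, hs⟩ A).toReal := by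
    intro A hA s hs
    simp only [hΓ, dif_pos hA]
    exact (key A hA).choose_spec s hs
  have hspan : Submodule.span ℝ K = ⊤ := by
    rw [eq_top_iff]
    intro v _
    obtain ⟨α, β, s, t, hα, hβ, hs, ht, hv⟩ := hgen v
    rw [hv]
    exact sub_mem (Submodule.smul_mem _ _ (Submodule.subset_span hs))
      (Submodule.smul_mem _ _ (Submodule.subset_span ht))
  refine ⟨Γ, ?_, ?_, ?_⟩
  · intro s hs
    refine ⟨M.toFun ⟨s, hs⟩, M.prob _, fun A hA => hΓval A hA s hs⟩
  · intro s A hA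
    exact hΓval A hA s s.2
  · intro Γ' hΓ' hΓ'val A hA
    have : (Γ' A : V →ₗ[ℝ] ℝ) = (Γ A : V →ₗ[ℝ] ℝ) := by
      apply LinearMap.ext_on hspan
      intro x hx
      simp only [ContinuousLinearMap.coe_coe]
      rw [hΓ'val ⟨x, hx⟩ A hA, hΓval A hA x hx]
    exact ContinuousLinearMap.coe_injective (by exact_mod_cast this)
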